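/- Suppose f* ∈ H, a positive integer k with 1 ≤ k ≤ n+1, elements a₁,…,a_k ∈ A, functions g₁,…,g_k ∈ L^q(S,m) with ‖gᵢ‖_q ≤ 1, and positive real numbers λ₁,…,λ_k with λ₁+⋯+λ_k = 1 satisfy: (i) ∫_S (Σ_{i=1}^{k} λᵢ gᵢ) h dm = 0 for all h ∈ H; and (ii) ∫_S gᵢ (f_{aᵢ} − f*) dm = ‖f_{aᵢ} − f*‖_p = max_{a∈A} ‖f_a − f*‖_p for all i with 1 ≤ i ≤ k. Then f* is a best simultaneous approximation (BSA) to {f_a}_{a∈A} from H, i.e., max_{a∈A} ‖f_a − f*‖_p ≤ max_{a∈A} ‖f_a − f‖_p for all f ∈ H. -/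

import Mathlib

open MeasureTheory
open scoped ENNReal

/-- **Sufficiency part of the characterization of a BSA in `L^p`.**
If `f⋆ ∈ H`, `a₁, …, a_k ∈ A`, functions `g₁, …, g_k` in the unit ball of
`L^q(S, m)` and positive `λ₁, …, λ_k` with sum one satisfy conditions (i) and
(ii), then `f⋆` is a best simultaneous approximation to `{f_a}_{a ∈ A}` from
`H`. -/
lemma holder_aux {S : Type*} [MeasurableSpace S] {m : Measure S} {p q : ℝ≥0∞}
    (hpq : p⁻¹ + q⁻¹ = 1) (u : Lp ℝ q m) (v : Lp ℝ p m) :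
    Integrable (fun s => u s * v s) m ∧
      (∫ s, u s * v s ∂m) ≤ ‖u‖ * ‖v‖ := by
  have hpqr : (1 : ℝ≥0∞) / 1 = 1 / q + 1 / p := by
    simp only [one_div, inv_one]; rw [add_comm]; exact hpq.symm
  have hmem : MemLp ((u : S → ℝ) • (v : S → ℝ)) 1 m :=
    (Lp.memLp v).smul (Lp.memLp u) (hpqr := ⟨by simpa [one_div] using hpqr.symm⟩)
  have hint : Integrable (fun s => u s * v s) m := by
    have := memLp_one_iff_integrable.mp hmem
    exact this
  refine ⟨hint, ?_⟩
  have h1 : (∫ s, u s * v s ∂m) ≤ ∫ s, ‖u s * v s‖ ∂m :=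
    le_trans (le_abs_self _) (Real.norm_eq_abs _ ▸ norm_integral_le_integral_norm _)
  have h2 : (∫ s, ‖u s * v s‖ ∂m) = (eLpNorm ((u : S → ℝ) • (v : S → ℝ)) 1 m).toReal := by
    rw [integral_norm_eq_lintegral_enorm hint.1, eLpNorm_one_eq_lintegral_enorm]
    rfl
  have h3 : eLpNorm ((u : S → ℝ) • (v : S → ℝ)) 1 m ≤ eLpNorm u q m * eLpNorm v p m :=
    eLpNorm_smul_le_mul_eLpNorm (Lp.aestronglyMeasurable v) (Lp.aestronglyMeasurable u) (hpqr := ⟨by simpa [one_div] using hpqr.symm⟩)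
  have hfin : eLpNorm u q m * eLpNorm v p m ≠ ⊤ :=
    (ENNReal.mul_lt_top (Lp.eLpNorm_lt_top u) (Lp.eLpNorm_lt_top v)).ne
  calc (∫ s, u s * v s ∂m) ≤ (eLpNorm ((u : S → ℝ) • (v : S → ℝ)) 1 m).toReal := h1.trans h2.le
    _ ≤ (eLpNorm u q m * eLpNorm v p m).toReal := ENNReal.toReal_mono hfin h3
    _ = ‖u‖ * ‖v‖ := by rw [ENNReal.toReal_mul, Lp.norm_def, Lp.norm_def]

theorem bsa_Lp_sufficiency
    {S : Type*} [MeasurableSpace S] (m : Measure S) [SigmaFinite m]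
    (p q : ℝ≥0∞) [Fact (1 ≤ p)] (hp : p ≠ ⊤) (hpq : p⁻¹ + q⁻¹ = 1)
    {A : Type*} [TopologicalSpace A] [CompactSpace A] [T2Space A] [Nonempty A]
    {n : ℕ} (hn : 1 ≤ n)
    (H : Submodule ℝ (Lp ℝ p m)) (hH : Module.finrank ℝ H = n)
    (F : A → Lp ℝ p m) (hF : Continuous F)
    (fs : Lp ℝ p m) (hfs : fs ∈ H)
    (k : ℕ) (hk1 : 1 ≤ k) (hk2 : k ≤ n + 1)
    (a : Fin k → A) (g : Fin k → Lp ℝ q m) (hg : ∀ i, ‖g i‖ ≤ 1)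
    (lam : Fin k → ℝ) (hlam : ∀ i, 0 < lam i) (hsum : (∑ i, lam i) = 1)
    (hi : ∀ h ∈ H, (∫ s, (∑ i, lam i * g i s) * h s ∂m) = 0)
    (hii : ∀ i, (∫ s, g i s * (F (a i) s - fs s) ∂m) = ‖F (a i) - fs‖ ∧
        ‖F (a i) - fs‖ = ⨆ b : A, ‖F b - fs‖) :
    ∀ f ∈ H, (⨆ a : A, ‖F a - fs‖) ≤ ⨆ a : A, ‖F a - f‖ := by

  intro f hf
  set M : ℝ := ⨆ b : A, ‖F b - fs‖ with hM
  set Q : ℝ := ⨆ b : A, ‖F b - f‖ with hQ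
  have hbdd : BddAbove (Set.range fun b : A => ‖F b - f‖) :=
    (isCompact_range ((hF.sub continuous_const).norm)).bddAbove
  have hQb : ∀ i, ‖F (a i) - f‖ ≤ Q := fun i => le_ciSup hbdd (a i)
  -- integrability of the products
  have hint1 : ∀ i, Integrable (fun s => g i s * (F (a i) - f) s) m :=
    fun i => (holder_aux hpq (g i) (F (a i) - f)).1
  have hint2 : ∀ i : Fin k, Integrable (fun s => g i s * (f - fs) s) m :=
    fun i => (holder_aux hpq (g i) (f - fs)).1
  -- decomposition of each integral
  have hdecomp : ∀ i, (∫ s, g i s * (F (a i) s - fs s) ∂m)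
      = (∫ s, g i s * (F (a i) - f) s ∂m) + ∫ s, g i s * (f - fs) s ∂m := by
    intro i
    rw [← integral_add (hint1 i) (hint2 i)]
    apply integral_congr_ae
    filter_upwards [Lp.coeFn_sub (F (a i)) f, Lp.coeFn_sub f fs] with s h1 h2
    rw [h1, h2]
    simp only [Pi.sub_apply]
    ring
  -- the cross term vanishes
  have hzero : (∑ i, lam i * ∫ s, g i s * (f - fs) s ∂m) = 0 := by
    have h0 := hi (f - fs) (Submodule.sub_mem H hf hfs)
    have hexp : (∫ s, (∑ i, lam i * g i s) * (f - fs) s ∂m)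
        = ∑ i, lam i * ∫ s, g i s * (f - fs) s ∂m := by
      have : (∫ s, (∑ i, lam i * g i s) * (f - fs) s ∂m)
          = ∫ s, ∑ i, lam i * (g i s * (f - fs) s) ∂m := by
        apply integral_congr_ae
        filter_upwards with s
        rw [Finset.sum_mul]
        congr 1 with i
        ring
      rw [this, integral_finset_sum _ (fun i _ => (hint2 i).const_mul (lam i))]
      simp_rw [integral_const_mul]
    rw [← hexp, h0]
  -- bound each main term
  have hbound : ∀ i, (∫ s, g i s * (F (a i) - f) s ∂m) ≤ Q := by
    intro i
    calc (∫ s, g i s * (F (a i) - f) s ∂m) ≤ ‖g i‖ * ‖F (a i) - f‖ :=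
          (holder_aux hpq (g i) (F (a i) - f)).2
      _ ≤ 1 * ‖F (a i) - f‖ := mul_le_mul_of_nonneg_right (hg i) (norm_nonneg _)
      _ = ‖F (a i) - f‖ := one_mul _
      _ ≤ Q := hQb i
  calc M = ∑ i, lam i * M := by rw [← Finset.sum_mul, hsum, one_mul]
    _ = ∑ i, lam i * ((∫ s, g i s * (F (a i) - f) s ∂m) + ∫ s, g i s * (f - fs) s ∂m) := by
        refine Finset.sum_congr rfl fun i _ => ?_
        rw [← hdecomp i, (hii i).1, (hii i).2]
    _ = (∑ i, lam i * ∫ s, g i s * (F (a i) - f) s ∂m)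
        + ∑ i, lam i * ∫ s, g i s * (f - fs) s ∂m := by
        rw [← Finset.sum_add_distrib]
        refine Finset.sum_congr rfl fun i _ => ?_
        ring
    _ = ∑ i, lam i * ∫ s, g i s * (F (a i) - f) s ∂m := by rw [hzero, add_zero]
    _ ≤ ∑ i, lam i * Q :=
        Finset.sum_le_sum fun i _ => mul_le_mul_of_nonneg_left (hbound i) (hlam i).le
    _ = Q := by rw [← Finset.sum_mul, hsum, one_mul]
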